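/- Let x = (x_n), y = (y_n) ∈ c₀. Then x ⊥_B y if and only if 0 lies in the convex hull of { conj(x_n) y_n : |x_n| = ‖x‖ }. -/

import Mathlib

open ENNReal Filter

/-- The space `c₀` of sequences converging to `0`, as a subspace of `ℓ∞`. -/
def czero (𝕂 : Type*) [RCLike 𝕂] : Submodule 𝕂 (lp (fun _ : ℕ => 𝕂) ∞) where
  carrier := {x | Tendsto (fun n => x n) atTop (nhds 0)}
  zero_mem' := by
    simpa [lp.coeFn_zero] using (tendsto_const_nhds : Tendsto (fun _ : ℕ => (0 : 𝕂)) atTop _)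
  add_mem' := by
    intro a b ha hb
    have h := (Set.mem_setOf_eq ▸ ha).add (Set.mem_setOf_eq ▸ hb)
    simpa [lp.coeFn_add, Set.mem_setOf_eq] using h
  smul_mem' := by
    intro c a ha
    have h := (Set.mem_setOf_eq ▸ ha).const_mul c
    simpa [lp.coeFn_smul, Set.mem_setOf_eq, smul_eq_mul] using h

section helpers

open RCLike NNReal
set_option maxHeartbeats 1000000
set_option synthInstance.maxHeartbeats 400000

variable {𝕂 : Type*} [RCLike 𝕂]

private lemma my_sep {S : Set 𝕂} (hS : S.Finite) (h0 : (0:𝕂) ∉ convexHull ℝ S) :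
    ∃ (μ : 𝕂) (δ : ℝ), 0 < δ ∧ ∀ z ∈ S, δ ≤ re (μ * z) := by
  obtain ⟨f, u, hu0, hfu⟩ := _root_.geometric_hahn_banach_point_closed
    (convex_convexHull ℝ S) (hS.isCompact_convexHull (𝕜 := ℝ)).isClosed h0
  have hu : (0:ℝ) < u := by simpa using hu0
  refine ⟨(f 1 : 𝕂) - (f I : 𝕂) * I, u, hu, ?_⟩
  intro z hz
  have hrep : re (((f 1 : 𝕂) - (f I : 𝕂) * I) * z) = f z := by
    have h1 : re (((f 1 : 𝕂) - (f I : 𝕂) * I) * z)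
        = f 1 * re z + f I * (im z * im (I:𝕂)) := by
      rw [sub_mul, map_sub, mul_assoc, re_ofReal_mul, re_ofReal_mul, mul_re, I_re]
      ring
    rw [h1, I_im]
    have h2 : z = (re z : ℝ) • (1:𝕂) + (im z : ℝ) • (I:𝕂) := by
      rw [real_smul_eq_coe_mul, real_smul_eq_coe_mul, mul_one, re_add_im]
    conv_rhs => rw [h2]
    rw [map_add, map_smul, map_smul]
    simp [mul_comm]
  rw [hrep]
  exact le_of_lt (hfu z (subset_convexHull ℝ S hz))

private lemma czero_coe_norm (x : czero 𝕂) : ‖x‖ = ‖(x : lp (fun _ : ℕ => 𝕂) ∞)‖ := rfl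

private lemma czero_apply_le (x : czero 𝕂) (n : ℕ) :
    ‖(x : lp (fun _ : ℕ => 𝕂) ∞) n‖ ≤ ‖x‖ :=
  lp.norm_apply_le_norm ENNReal.top_ne_zero _ n

private lemma czero_tendsto (x : czero 𝕂) :
    Tendsto (fun n => (x : lp (fun _ : ℕ => 𝕂) ∞) n) atTop (nhds 0) := x.2

private lemma czero_sup_lt (x : czero 𝕂) (hx : 0 < ‖x‖) :
    ∃ c : ℝ, 0 ≤ c ∧ c < ‖x‖ ∧ ∀ n, ‖(x : lp (fun _ : ℕ => 𝕂) ∞) n‖ ≠ ‖x‖ →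
      ‖(x : lp (fun _ : ℕ => 𝕂) ∞) n‖ ≤ c := by
  set X := (x : lp (fun _ : ℕ => 𝕂) ∞)
  obtain ⟨N, hN⟩ := Metric.tendsto_atTop.mp (czero_tendsto x) (‖x‖/2) (by linarith)
  have hN' : ∀ n, N ≤ n → ‖X n‖ < ‖x‖/2 := by
    intro n hn; simpa [dist_zero_right] using hN n hn
  set F := (Finset.range N).filter (fun n => ‖X n‖ ≠ ‖x‖) with hF
  refine ⟨max (‖x‖/2) ((F.sup (fun n => ‖X n‖₊) : ℝ≥0) : ℝ), ?_, ?_, ?_⟩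
  · exact le_max_of_le_right (NNReal.coe_nonneg _)
  · apply max_lt (by linarith)
    have : F.sup (fun n => ‖X n‖₊) < ‖x‖₊ := by
      apply Finset.sup_lt_iff (by simpa using hx) |>.mpr
      intro n hn
      have h1 : ‖X n‖ ≤ ‖x‖ := czero_apply_le x n
      have h2 : ‖X n‖ ≠ ‖x‖ := (Finset.mem_filter.mp hn).2
      have : ‖X n‖ < ‖x‖ := lt_of_le_of_ne h1 h2
      simpa [← NNReal.coe_lt_coe] using this
    simpa [← NNReal.coe_lt_coe] using this
  · intro n hn
    by_cases h : n < N
    · have hnF : n ∈ F := Finset.mem_filter.mpr ⟨Finset.mem_range.mpr h, hn⟩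
      have := Finset.le_sup (f := fun n => ‖X n‖₊) hnF
      exact le_max_of_le_right (by simpa [← NNReal.coe_le_coe] using this)
    · exact le_max_of_le_left (le_of_lt (hN' n (not_lt.mp h)))

end helpers

set_option maxHeartbeats 2000000
set_option synthInstance.maxHeartbeats 400000

open RCLike

theorem czero_BJ_orthogonality {𝕂 : Type*} [RCLike 𝕂] (x y : czero 𝕂) :
    (∀ lam : 𝕂, ‖x‖ ≤ ‖x + lam • y‖) ↔
      (0 : 𝕂) ∈ convexHull ℝ
        {z : 𝕂 | ∃ n : ℕ, ‖(x : lp (fun _ : ℕ => 𝕂) ∞) n‖ = ‖x‖ ∧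
          (starRingEnd 𝕂) ((x : lp (fun _ : ℕ => 𝕂) ∞) n) *
            (y : lp (fun _ : ℕ => 𝕂) ∞) n = z} := by
  set X := (x : lp (fun _ : ℕ => 𝕂) ∞) with hXdef
  set Y := (y : lp (fun _ : ℕ => 𝕂) ∞) with hYdef
  have happly : ∀ (lam : 𝕂) (n : ℕ),
      ((x + lam • y : czero 𝕂) : lp (fun _ : ℕ => 𝕂) ∞) n = X n + lam * Y n := by
    intro lam n
    have h : ((x + lam • y : czero 𝕂) : lp (fun _ : ℕ => 𝕂) ∞) = X + lam • Y := rfl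
    rw [h]
    simp [lp.coeFn_add, lp.coeFn_smul, smul_eq_mul]
    rfl
  have hxle : ∀ n, ‖X n‖ ≤ ‖x‖ := czero_apply_le x
  have hyle : ∀ n, ‖Y n‖ ≤ ‖y‖ := czero_apply_le y
  constructor
  · -- hard direction
    intro horth
    by_contra h0
    have hxne : (0:ℝ) < ‖x‖ := by
      rcases eq_or_lt_of_le (norm_nonneg x) with h | h
      · exfalso
        apply h0
        apply subset_convexHull ℝ _
        have hX0 : X 0 = 0 := by
          have h1 : ‖X 0‖ ≤ 0 := h ▸ hxle 0
          simpa using le_antisymm h1 (norm_nonneg _)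
        exact ⟨0, by rw [hX0, ← h, norm_zero], by rw [hX0, map_zero, zero_mul]⟩
      · exact h
    obtain ⟨c, hc0, hclt, hcbd⟩ := czero_sup_lt x hxne
    have hMfin : {m : ℕ | ‖X m‖ = ‖x‖}.Finite := by
      obtain ⟨N, hN⟩ := Metric.tendsto_atTop.mp (czero_tendsto x) ‖x‖ hxne
      apply Set.Finite.subset (Set.finite_Iio N)
      intro m hm
      by_contra hmN
      have h1 : ‖X m‖ < ‖x‖ := by
        have := hN m (not_lt.mp hmN); rwa [dist_zero_right] at this
      simp only [Set.mem_setOf_eq] at hm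
      exact absurd hm (ne_of_lt h1)
    have hSfin : Set.Finite {z : 𝕂 | ∃ n : ℕ, ‖X n‖ = ‖x‖ ∧
        (starRingEnd 𝕂) (X n) * Y n = z} := by
      apply Set.Finite.subset (hMfin.image (fun m => (starRingEnd 𝕂) (X m) * Y m))
      rintro z ⟨m, h1, h2⟩
      exact ⟨m, h1, h2⟩
    obtain ⟨μ, δ, hδ, hsep⟩ := my_sep hSfin h0
    have hK2nn : (0:ℝ) ≤ ‖μ‖ * ‖y‖ := by positivity
    have hKnn : (0:ℝ) ≤ ‖μ‖^2 * ‖y‖^2 := by positivity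
    set t := min ((‖x‖ - c)/(‖μ‖ * ‖y‖ + 1)) (δ/(‖μ‖^2 * ‖y‖^2 + 1)) with ht
    have ht0 : 0 < t :=
      lt_min (div_pos (by linarith) (by linarith)) (div_pos hδ (by linarith))
    have ht1 : t * (‖μ‖ * ‖y‖ + 1) ≤ ‖x‖ - c := by
      rw [← le_div_iff₀ (by linarith)]; exact min_le_left _ _
    have ht2 : t * (‖μ‖^2 * ‖y‖^2 + 1) ≤ δ := by
      rw [← le_div_iff₀ (by linarith)]; exact min_le_right _ _
    set lam : 𝕂 := -((t:ℝ):𝕂) * μ with hlam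
    have hlamnorm : ‖lam‖ = t * ‖μ‖ := by
      rw [hlam, norm_mul, norm_neg, RCLike.norm_ofReal, abs_of_pos ht0]
    have hYb : ∀ m, ‖lam * Y m‖ ≤ t * (‖μ‖ * ‖y‖) := by
      intro m
      rw [norm_mul, hlamnorm, mul_assoc]
      exact mul_le_mul_of_nonneg_left
        (mul_le_mul_of_nonneg_left (hyle m) (norm_nonneg μ)) ht0.le
    have hbM : ∀ m, ‖X m‖ = ‖x‖ → ‖X m + lam * Y m‖^2 ≤ ‖x‖^2 - t*δ := by
      intro m hm
      have hz : δ ≤ re (μ * ((starRingEnd 𝕂) (X m) * Y m)) := hsep _ ⟨m, hm, rfl⟩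
      have expand : ‖X m + lam * Y m‖^2
          = ‖X m‖^2 + 2 * re ((starRingEnd 𝕂) (X m) * (lam * Y m)) + ‖lam * Y m‖^2 := by
        simpa [RCLike.inner_apply, mul_comm] using norm_add_sq (𝕜 := 𝕂) (X m) (lam * Y m)
      have hre : re ((starRingEnd 𝕂) (X m) * (lam * Y m))
          = -(t * re (μ * ((starRingEnd 𝕂) (X m) * Y m))) := by
        have h : (starRingEnd 𝕂) (X m) * (lam * Y m)
            = -(((t:ℝ):𝕂) * (μ * ((starRingEnd 𝕂) (X m) * Y m))) := by rw [hlam]; ring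
        rw [h, map_neg, re_ofReal_mul]
      have hY2 : ‖lam * Y m‖^2 ≤ t^2 * (‖μ‖^2 * ‖y‖^2) := by
        nlinarith [hYb m, norm_nonneg (lam * Y m), ht0.le]
      rw [expand, hre, hm]
      nlinarith [mul_le_mul_of_nonneg_left hz ht0.le,
        mul_le_mul_of_nonneg_left ht2 ht0.le, hY2, ht0.le, sq_nonneg t]
    have hbMc : ∀ m, ‖X m‖ ≠ ‖x‖ → ‖X m + lam * Y m‖ ≤ c + t * (‖μ‖ * ‖y‖) := by
      intro m hm
      exact le_trans (norm_add_le _ _) (add_le_add (hcbd m hm) (hYb m))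
    set b := max (Real.sqrt (‖x‖^2 - t*δ)) (c + t * (‖μ‖ * ‖y‖)) with hb
    have hblt : b < ‖x‖ := by
      apply max_lt
      · rw [Real.sqrt_lt' hxne]
        nlinarith [mul_pos ht0 hδ]
      · nlinarith [ht1, ht0]
    have hble : ‖x + lam • y‖ ≤ b := by
      rw [czero_coe_norm]
      apply lp.norm_le_of_forall_le (le_trans (Real.sqrt_nonneg _) (le_max_left _ _))
      intro m
      rw [happly lam m]
      by_cases hm : ‖X m‖ = ‖x‖
      · refine le_trans ?_ (le_max_left _ _)
        have h1 : ‖X m + lam * Y m‖ = Real.sqrt (‖X m + lam * Y m‖^2) :=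
          (Real.sqrt_sq (norm_nonneg _)).symm
        rw [h1]
        exact Real.sqrt_le_sqrt (hbM m hm)
      · exact le_trans (hbMc m hm) (le_max_right _ _)
    have := horth lam
    linarith
  · -- easy direction
    intro h0 lam
    rw [convexHull_eq] at h0
    obtain ⟨ι, s, w, z, hw0, hw1, hzS, hcm⟩ := h0
    rw [Finset.centerMass_eq_of_sum_1 _ _ hw1] at hcm
    have hch : ∀ i : {i // i ∈ s}, ∃ m : ℕ, ‖X m‖ = ‖x‖ ∧
        (starRingEnd 𝕂) (X m) * Y m = z i := fun i => hzS i i.2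
    choose n hn1 hn2 using hch
    rcases eq_or_lt_of_le (norm_nonneg x) with h | hxpos
    · rw [← h]; exact norm_nonneg _
    have e1 : ∀ i : {i // i ∈ s},
        re ((starRingEnd 𝕂) (X (n i)) * (X (n i) + lam * Y (n i)))
          = ‖x‖^2 + re (lam * z i) := by
      intro i
      have h : (starRingEnd 𝕂) (X (n i)) * (X (n i) + lam * Y (n i))
          = (starRingEnd 𝕂) (X (n i)) * X (n i)
            + lam * ((starRingEnd 𝕂) (X (n i)) * Y (n i)) := by ring
      rw [h, RCLike.conj_mul, hn2 i, hn1 i, map_add, ← RCLike.ofReal_pow, RCLike.ofReal_re]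
    have key : ‖x‖ * ‖x‖ ≤ ‖x‖ * ‖x + lam • y‖ := by
      have e2 : ∑ i ∈ s.attach,
          w i * re ((starRingEnd 𝕂) (X (n i)) * (X (n i) + lam * Y (n i))) = ‖x‖^2 := by
        have hterm : ∀ i ∈ s.attach,
            w i * re ((starRingEnd 𝕂) (X (n i)) * (X (n i) + lam * Y (n i)))
              = w i * ‖x‖^2 + re (lam * ((w i : ℝ) • z i)) := by
          intro i _
          rw [e1 i, mul_smul_comm, RCLike.smul_re]
          ring
        rw [Finset.sum_congr rfl hterm, Finset.sum_add_distrib, ← Finset.sum_mul,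
          ← map_sum, ← Finset.mul_sum]
        have hs1 : ∑ i ∈ s.attach, w (i:ι) = 1 := by
          rw [Finset.sum_attach s (fun i => w i)]; exact hw1
        have hs2 : ∑ i ∈ s.attach, (w (i:ι) : ℝ) • z (i:ι) = 0 := by
          rw [Finset.sum_attach s (fun i => (w i : ℝ) • z i)]; exact hcm
        rw [hs1, hs2, mul_zero, map_zero, one_mul, add_zero]
      have e3 : ∀ i ∈ s.attach,
          w i * re ((starRingEnd 𝕂) (X (n i)) * (X (n i) + lam * Y (n i)))
            ≤ w i * (‖x‖ * ‖x + lam • y‖) := by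
        intro i _
        apply mul_le_mul_of_nonneg_left _ (hw0 i i.2)
        calc re ((starRingEnd 𝕂) (X (n i)) * (X (n i) + lam * Y (n i)))
            ≤ ‖(starRingEnd 𝕂) (X (n i)) * (X (n i) + lam * Y (n i))‖ :=
              le_trans (le_abs_self _) (abs_re_le_norm _)
          _ = ‖X (n i)‖ * ‖X (n i) + lam * Y (n i)‖ := by rw [norm_mul, norm_conj]
          _ ≤ ‖x‖ * ‖x + lam • y‖ := by
              apply mul_le_mul (le_of_eq (hn1 i)) _ (norm_nonneg _) (norm_nonneg x)
              rw [← happly lam (n i)]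
              exact czero_apply_le (x + lam • y) (n i)
      calc ‖x‖ * ‖x‖ = ‖x‖^2 := (sq ‖x‖).symm
        _ = ∑ i ∈ s.attach,
            w i * re ((starRingEnd 𝕂) (X (n i)) * (X (n i) + lam * Y (n i))) := e2.symm
        _ ≤ ∑ i ∈ s.attach, w i * (‖x‖ * ‖x + lam • y‖) := Finset.sum_le_sum e3
        _ = (∑ i ∈ s.attach, w (i:ι)) * (‖x‖ * ‖x + lam • y‖) := by rw [Finset.sum_mul]
        _ = ‖x‖ * ‖x + lam • y‖ := by
            rw [Finset.sum_attach s (fun i => w i), hw1, one_mul]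
    exact le_of_mul_le_mul_left key hxpos
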